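/- Let ν > 1 and define B_ν(u) = (1 − c_ν u^ν K_ν(u)) / u² for u > 0, where K_ν is the modified Bessel function of the second kind and c_ν = 2^{1−ν}/Γ(ν). Then lim_{u → 0⁺} B_ν(u) = 1/(4(ν − 1)). -/

import Mathlib

open Filter

/-- The modified Bessel function of the second kind, via its integral
representation `K_ν(u) = ∫_0^∞ exp(-u cosh t) cosh(ν t) dt`. -/
noncomputable def besselK (ν u : ℝ) : ℝ :=
  ∫ t in Set.Ioi (0 : ℝ), Real.exp (-u * Real.cosh t) * Real.cosh (ν * t)

open MeasureTheory Set Real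

section aux
variable {ν u : ℝ}

lemma image_univ_exp (hu : 0 < u) :
    (fun t : ℝ => u / 2 * Real.exp t) '' Set.univ = Set.Ioi 0 := by
  rw [Set.image_univ]
  ext x
  simp only [Set.mem_range, Set.mem_Ioi]
  constructor
  · rintro ⟨t, rfl⟩; positivity
  · intro hx
    exact ⟨Real.log (2 * x / u), by
      rw [Real.exp_log (by positivity)]
      field_simp⟩

lemma cov_eq (hu : 0 < u) (g : ℝ → ℝ) :
    ∫ s in Set.Ioi (0:ℝ), g s = ∫ t : ℝ, (u / 2 * Real.exp t) * g (u / 2 * Real.exp t) := by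
  have h := integral_image_eq_integral_abs_deriv_smul (f := fun t => u / 2 * Real.exp t)
    (f' := fun t => u / 2 * Real.exp t) MeasurableSet.univ
    (fun x _ => ((Real.hasDerivAt_exp x).const_mul (u / 2)).hasDerivWithinAt)
    (((Real.exp_strictMono).const_mul (by positivity : (0:ℝ) < u / 2)).injective.injOn) g
  rw [image_univ_exp hu] at h
  rw [h, MeasureTheory.Measure.restrict_univ]
  congr 1
  ext t
  rw [abs_of_pos (by positivity), smul_eq_mul]

lemma cov_int (hu : 0 < u) (g : ℝ → ℝ) :
    MeasureTheory.IntegrableOn g (Set.Ioi (0:ℝ)) ↔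
      MeasureTheory.Integrable (fun t : ℝ => (u / 2 * Real.exp t) * g (u / 2 * Real.exp t)) := by
  have h := integrableOn_image_iff_integrableOn_abs_deriv_smul (f := fun t => u / 2 * Real.exp t)
    (f' := fun t => u / 2 * Real.exp t) MeasurableSet.univ
    (fun x _ => ((Real.hasDerivAt_exp x).const_mul (u / 2)).hasDerivWithinAt)
    (((Real.exp_strictMono).const_mul (by positivity : (0:ℝ) < u / 2)).injective.injOn) g
  rw [image_univ_exp hu] at h
  rw [h]
  unfold MeasureTheory.IntegrableOn
  rw [MeasureTheory.Measure.restrict_univ]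
  constructor <;> intro hi <;> [skip; skip] <;>
  · refine hi.congr (Filter.Eventually.of_forall fun t => ?_)
    simp only [smul_eq_mul, abs_of_pos (show (0:ℝ) < u / 2 * Real.exp t by positivity)]
end aux


section repr
variable {ν u : ℝ}

lemma aux_pointwise (hu : 0 < u) (t : ℝ) :
    (u / 2 * Real.exp t) *
      (Real.exp (-(u / 2 * Real.exp t)) * Real.exp (-(u ^ 2 / (4 * (u / 2 * Real.exp t)))) *
        (u / 2 * Real.exp t) ^ (ν - 1) * (2 / u) ^ ν) =
    Real.exp (-u * Real.cosh t) * Real.exp (ν * t) := by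
  have hs : (0:ℝ) < u / 2 * Real.exp t := by positivity
  have h1 : u ^ 2 / (4 * (u / 2 * Real.exp t)) = u / 2 * Real.exp (-t) := by
    rw [Real.exp_neg]; field_simp; ring
  have h2 : (u / 2 * Real.exp t) * (u / 2 * Real.exp t) ^ (ν - 1) = (u / 2 * Real.exp t) ^ ν := by
    nth_rewrite 1 [← Real.rpow_one (u / 2 * Real.exp t)]
    rw [← Real.rpow_add hs]; norm_num
  have h3 : (u / 2 * Real.exp t) ^ ν * (2 / u) ^ ν = Real.exp (ν * t) := by
    rw [← Real.mul_rpow hs.le (by positivity)]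
    have : u / 2 * Real.exp t * (2 / u) = Real.exp t := by field_simp
    rw [this, ← Real.exp_mul, mul_comm]
  calc (u / 2 * Real.exp t) *
      (Real.exp (-(u / 2 * Real.exp t)) * Real.exp (-(u ^ 2 / (4 * (u / 2 * Real.exp t)))) *
        (u / 2 * Real.exp t) ^ (ν - 1) * (2 / u) ^ ν)
      = (Real.exp (-(u / 2 * Real.exp t)) * Real.exp (-(u ^ 2 / (4 * (u / 2 * Real.exp t))))) *
        ((u / 2 * Real.exp t) * (u / 2 * Real.exp t) ^ (ν - 1) * (2 / u) ^ ν) := by ring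
    _ = Real.exp (-u * Real.cosh t) * Real.exp (ν * t) := by
        rw [h2, h3, ← Real.exp_add, h1, Real.cosh_eq]
        congr 2
        ring

lemma aux_int (hν : 1 < ν) (u : ℝ) :
    MeasureTheory.IntegrableOn
      (fun s : ℝ => Real.exp (-s) * Real.exp (-(u ^ 2 / (4 * s))) * s ^ (ν - 1))
      (Set.Ioi (0:ℝ)) := by
  refine MeasureTheory.Integrable.mono (Real.GammaIntegral_convergent (show (0:ℝ) < ν by linarith)) ?_ ?_
  · refine ContinuousOn.aestronglyMeasurable ?_ measurableSet_Ioi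
    refine ContinuousOn.mul (ContinuousOn.mul ?_ ?_) ?_
    · exact (Real.continuous_exp.comp continuous_neg).continuousOn
    · refine Real.continuous_exp.comp_continuousOn ?_
      refine ContinuousOn.neg (ContinuousOn.div continuousOn_const
        (continuousOn_const.mul continuousOn_id) fun s hs => ?_)
      have : (0:ℝ) < s := hs
      positivity
    · intro s hs
      exact (Real.continuousAt_rpow_const s (ν - 1)
        (Or.inl (ne_of_gt hs))).continuousWithinAt
  · filter_upwards [MeasureTheory.ae_restrict_mem measurableSet_Ioi] with s hs
    have hs' : (0:ℝ) < s := hs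
    rw [Real.norm_eq_abs, abs_of_nonneg (by positivity), Real.norm_eq_abs,
      abs_of_nonneg (by positivity)]
    have : Real.exp (-(u ^ 2 / (4 * s))) ≤ 1 := Real.exp_le_one_iff.mpr (neg_nonpos.mpr (by positivity))
    nlinarith [Real.exp_pos (-s), Real.rpow_pos_of_pos hs' (ν - 1), this,
      mul_pos (Real.exp_pos (-s)) (Real.rpow_pos_of_pos hs' (ν - 1))]

lemma besselK_repr (hν : 1 < ν) (hu : 0 < u) :
    u ^ ν * besselK ν u =
      2 ^ (ν - 1) *
        ∫ s in Set.Ioi (0:ℝ), Real.exp (-s) * Real.exp (-(u ^ 2 / (4 * s))) * s ^ (ν - 1) := by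
  set g : ℝ → ℝ := fun s =>
    Real.exp (-s) * Real.exp (-(u ^ 2 / (4 * s))) * s ^ (ν - 1) * (2 / u) ^ ν with hg
  have hgi : MeasureTheory.IntegrableOn g (Set.Ioi (0:ℝ)) := (aux_int hν u).mul_const _
  have hpt : ∀ t : ℝ, (u / 2 * Real.exp t) * g (u / 2 * Real.exp t)
      = Real.exp (-u * Real.cosh t) * Real.exp (ν * t) := fun t => aux_pointwise hu t
  set h : ℝ → ℝ := fun t => Real.exp (-u * Real.cosh t) * Real.exp (ν * t) with hh
  have hhi : MeasureTheory.Integrable h := by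
    have := (cov_int hu g).mp hgi
    exact this.congr (Filter.Eventually.of_forall fun t => hpt t)
  have hint_eq : ∫ s in Set.Ioi (0:ℝ), g s = ∫ t : ℝ, h t := by
    rw [cov_eq hu g]
    exact MeasureTheory.integral_congr_ae (Filter.Eventually.of_forall fun t => hpt t)
  -- symmetrization
  have hneg : ∀ t : ℝ, h (-t) = Real.exp (-u * Real.cosh t) * Real.exp (-(ν * t)) := by
    intro t; simp [hh, Real.cosh_neg, mul_neg]
  have h1 : MeasureTheory.IntegrableOn (fun t => h (-t)) (Set.Ioi (0:ℝ)) :=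
    hhi.comp_neg.integrableOn
  have e1 : (∫ t in Set.Ioi (0:ℝ), h (-t)) = ∫ t in Set.Iic (0:ℝ), h t := by
    rw [integral_comp_neg_Ioi]
    norm_num
  have hsplit : besselK ν u = (1 / 2) * ∫ t : ℝ, h t := by
    rw [← intervalIntegral.integral_Iic_add_Ioi (hhi.integrableOn) (hhi.integrableOn)]
    rw [besselK]
    rw [show (∫ t in Set.Ioi (0:ℝ), Real.exp (-u * Real.cosh t) * Real.cosh (ν * t))
        = ∫ t in Set.Ioi (0:ℝ), (1/2) * (h (-t) + h t) from
      MeasureTheory.integral_congr_ae (Filter.Eventually.of_forall fun t => by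
        simp only [hh, Real.cosh_neg, Real.cosh_eq, mul_neg]
        ring)]
    rw [MeasureTheory.integral_const_mul, MeasureTheory.integral_add h1 hhi.integrableOn, e1]
  have hfin : ∫ t : ℝ, h t = (2 / u) ^ ν *
      ∫ s in Set.Ioi (0:ℝ), Real.exp (-s) * Real.exp (-(u ^ 2 / (4 * s))) * s ^ (ν - 1) := by
    rw [← hint_eq]
    simp only [hg]
    rw [MeasureTheory.integral_mul_const, mul_comm]
  rw [hsplit, hfin]
  have h4 : u ^ ν * (2 / u) ^ ν = 2 ^ ν := by
    rw [← Real.mul_rpow hu.le (by positivity)]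
    congr 1
    field_simp
  have h5 : (2:ℝ) ^ (ν - 1) = 2 ^ ν / 2 := by
    rw [Real.rpow_sub (by norm_num), Real.rpow_one]
  rw [h5, ← h4]
  ring
end repr

section limitpart
variable {ν : ℝ}

lemma slope_limit :
    Filter.Tendsto (fun y : ℝ => (1 - Real.exp (-y)) / y) (nhdsWithin 0 (Set.Ioi 0)) (nhds 1) := by
  have hd : HasDerivAt (fun y : ℝ => 1 - Real.exp (-y)) 1 0 := by
    have h1 : HasDerivAt (fun y : ℝ => Real.exp (-y)) (-Real.exp (-(0:ℝ))) 0 := by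
      simpa [Function.comp_def] using ((Real.hasDerivAt_exp (-(0:ℝ))).comp 0 (hasDerivAt_neg 0))
    simpa using h1.const_sub (1:ℝ)
  have := hasDerivAt_iff_tendsto_slope.mp hd
  have h2 : Filter.Tendsto (slope (fun y : ℝ => 1 - Real.exp (-y)) 0)
      (nhdsWithin 0 (Set.Ioi 0)) (nhds 1) :=
    this.mono_left (nhdsWithin_mono 0 fun y hy => ne_of_gt hy)
  refine h2.congr' ?_
  filter_upwards [self_mem_nhdsWithin] with y hy
  have hy' : (y:ℝ) ≠ 0 := ne_of_gt hy
  simp [slope, hy', div_eq_mul_inv, mul_comm]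

lemma pointwise_limit {s : ℝ} (hs : 0 < s) :
    Filter.Tendsto (fun u : ℝ => (1 - Real.exp (-(u ^ 2 / (4 * s)))) / u ^ 2)
      (nhdsWithin 0 (Set.Ioi 0)) (nhds (1 / (4 * s))) := by
  have hy : Filter.Tendsto (fun u : ℝ => u ^ 2 / (4 * s)) (nhdsWithin 0 (Set.Ioi 0))
      (nhdsWithin 0 (Set.Ioi 0)) := by
    apply tendsto_nhdsWithin_of_tendsto_nhds_of_eventually_within
    · have : Filter.Tendsto (fun u : ℝ => u ^ 2 / (4 * s)) (nhds 0) (nhds ((0:ℝ)^2 / (4*s))) :=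
        ((continuous_pow 2).div_const (4*s)).tendsto 0
      simpa using this.mono_left nhdsWithin_le_nhds
    · filter_upwards [self_mem_nhdsWithin] with u hu
      have : (0:ℝ) < u := hu
      exact Set.mem_Ioi.mpr (by positivity)
  have hcomp := slope_limit.comp hy
  have : Filter.Tendsto (fun u : ℝ =>
      ((1 - Real.exp (-(u ^ 2 / (4 * s)))) / (u ^ 2 / (4 * s))) * (1 / (4 * s)))
      (nhdsWithin 0 (Set.Ioi 0)) (nhds (1 * (1 / (4 * s)))) :=
    hcomp.mul_const _
  rw [one_mul] at this
  refine this.congr' ?_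
  filter_upwards [self_mem_nhdsWithin] with u hu
  have hu' : (0:ℝ) < u := hu
  field_simp

lemma key_tendsto (hν : 1 < ν) :
    Filter.Tendsto (fun u : ℝ => ∫ s in Set.Ioi (0:ℝ),
        Real.exp (-s) * s ^ (ν - 1) * ((1 - Real.exp (-(u ^ 2 / (4 * s)))) / u ^ 2))
      (nhdsWithin 0 (Set.Ioi 0))
      (nhds (Real.Gamma (ν - 1) / 4)) := by
  have hν1 : (0:ℝ) < ν - 1 := by linarith
  have hbound : MeasureTheory.IntegrableOn
      (fun s : ℝ => Real.exp (-s) * s ^ (ν - 1 - 1) * (4:ℝ)⁻¹) (Set.Ioi (0:ℝ)) :=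
    (Real.GammaIntegral_convergent hν1).mul_const _
  have hmain := MeasureTheory.tendsto_integral_filter_of_dominated_convergence
    (μ := MeasureTheory.volume.restrict (Set.Ioi (0:ℝ)))
    (F := fun (u : ℝ) (s : ℝ) =>
      Real.exp (-s) * s ^ (ν - 1) * ((1 - Real.exp (-(u ^ 2 / (4 * s)))) / u ^ 2))
    (f := fun s : ℝ => Real.exp (-s) * s ^ (ν - 1 - 1) * (4:ℝ)⁻¹)
    (l := nhdsWithin 0 (Set.Ioi 0))
    (bound := fun s : ℝ => Real.exp (-s) * s ^ (ν - 1 - 1) * (4:ℝ)⁻¹)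
    ?_ ?_ hbound ?_
  · have hval : (∫ s in Set.Ioi (0:ℝ), Real.exp (-s) * s ^ (ν - 1 - 1) * (4:ℝ)⁻¹)
        = Real.Gamma (ν - 1) / 4 := by
      rw [MeasureTheory.integral_mul_const, ← Real.Gamma_eq_integral hν1]
      ring
    rwa [hval] at hmain
  · filter_upwards [self_mem_nhdsWithin] with u hu
    refine ContinuousOn.aestronglyMeasurable ?_ measurableSet_Ioi
    refine ContinuousOn.mul (ContinuousOn.mul ?_ ?_) ?_
    · exact (Real.continuous_exp.comp continuous_neg).continuousOn
    · intro s hs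
      exact (Real.continuousAt_rpow_const s (ν - 1)
        (Or.inl (ne_of_gt hs))).continuousWithinAt
    · refine ContinuousOn.div_const ?_ _
      refine ContinuousOn.sub continuousOn_const ?_
      refine Real.continuous_exp.comp_continuousOn ?_
      refine ContinuousOn.neg (ContinuousOn.div continuousOn_const
        (continuousOn_const.mul continuousOn_id) fun s hs => ?_)
      have : (0:ℝ) < s := hs
      positivity
  · filter_upwards [self_mem_nhdsWithin] with u hu
    have hu' : (0:ℝ) < u := hu
    filter_upwards [MeasureTheory.ae_restrict_mem measurableSet_Ioi] with s hs
    have hs' : (0:ℝ) < s := hs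
    set x : ℝ := u ^ 2 / (4 * s) with hx
    have hx0 : 0 < x := by positivity
    have hE1 : Real.exp (-x) ≤ 1 := Real.exp_le_one_iff.mpr (by linarith)
    have hE2 : 1 - Real.exp (-x) ≤ x := by nlinarith [Real.add_one_le_exp (-x)]
    have hpow : s ^ (ν - 1) = s ^ (ν - 1 - 1) * s := by
      rw [← Real.rpow_add_one (ne_of_gt hs')]
      ring_nf
    have hnum : 0 ≤ 1 - Real.exp (-x) := by linarith
    rw [Real.norm_eq_abs, abs_of_nonneg (mul_nonneg
      (mul_nonneg (Real.exp_pos _).le (Real.rpow_nonneg hs'.le _))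
      (div_nonneg hnum (by positivity)))]
    have hdiv : (1 - Real.exp (-x)) / u ^ 2 ≤ 1 / (4 * s) := by
      rw [div_le_div_iff₀ (by positivity) (by positivity)]
      have : x * (4 * s) = u ^ 2 := by rw [hx]; field_simp
      nlinarith
    calc Real.exp (-s) * s ^ (ν - 1) * ((1 - Real.exp (-x)) / u ^ 2)
        ≤ Real.exp (-s) * s ^ (ν - 1) * (1 / (4 * s)) := by
          apply mul_le_mul_of_nonneg_left hdiv (by positivity)
      _ = Real.exp (-s) * s ^ (ν - 1 - 1) * (4:ℝ)⁻¹ := by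
          rw [hpow]; field_simp
  · filter_upwards [MeasureTheory.ae_restrict_mem measurableSet_Ioi] with s hs
    have hs' : (0:ℝ) < s := hs
    have := ((pointwise_limit hs').const_mul (Real.exp (-s) * s ^ (ν - 1)))
    have heq : Real.exp (-s) * s ^ (ν - 1) * (1 / (4 * s))
        = Real.exp (-s) * s ^ (ν - 1 - 1) * (4:ℝ)⁻¹ := by
      rw [show s ^ (ν - 1) = s ^ (ν - 1 - 1) * s by
        rw [← Real.rpow_add_one (ne_of_gt hs')]; ring_nf]
      field_simp
    rw [heq] at this
    exact this
end limitpart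

/-- For `ν > 1`, with `c_ν = 2^{1-ν}/Γ(ν)`, the quotient
`B_ν(u) = (1 - c_ν u^ν K_ν(u))/u²` tends to `1/(4(ν-1))` as `u → 0⁺`. -/
theorem stmt15 (ν : ℝ) (hν : 1 < ν) :
    Tendsto
      (fun u : ℝ =>
        (1 - (2 : ℝ) ^ (1 - ν) / Real.Gamma ν * u ^ ν * besselK ν u) / u ^ 2)
      (nhdsWithin 0 (Set.Ioi 0)) (nhds (1 / (4 * (ν - 1)))) := by
  have hν1 : (0:ℝ) < ν - 1 := by linarith
  have hΓ : 0 < Real.Gamma ν := Real.Gamma_pos_of_pos (by linarith)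
  have hΓ1 : 0 < Real.Gamma (ν - 1) := Real.Gamma_pos_of_pos hν1
  have hGam : Real.Gamma ν = (ν - 1) * Real.Gamma (ν - 1) := by
    conv_lhs => rw [show ν = ν - 1 + 1 by ring]
    rw [Real.Gamma_add_one (ne_of_gt hν1)]
  have hlim := (key_tendsto hν).const_mul (Real.Gamma ν)⁻¹
  have hval : (Real.Gamma ν)⁻¹ * (Real.Gamma (ν - 1) / 4) = 1 / (4 * (ν - 1)) := by
    rw [hGam]
    field_simp
  rw [hval] at hlim
  refine hlim.congr' ?_
  filter_upwards [self_mem_nhdsWithin] with u hu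
  have hu' : (0:ℝ) < u := hu
  have hu2 : (u:ℝ) ^ 2 ≠ 0 := by positivity
  have hrepr := besselK_repr hν hu'
  have hginteg := aux_int hν u
  have hGint := Real.GammaIntegral_convergent (show (0:ℝ) < ν by linarith)
  have hGeq : Real.Gamma ν = ∫ s in Set.Ioi (0:ℝ), Real.exp (-s) * s ^ (ν - 1) :=
    Real.Gamma_eq_integral (by linarith)
  set I : ℝ := ∫ s in Set.Ioi (0:ℝ),
    Real.exp (-s) * Real.exp (-(u ^ 2 / (4 * s))) * s ^ (ν - 1) with hI
  set T : ℝ := ∫ s in Set.Ioi (0:ℝ),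
    Real.exp (-s) * s ^ (ν - 1) * ((1 - Real.exp (-(u ^ 2 / (4 * s)))) / u ^ 2) with hTdef
  have hc : (2:ℝ) ^ (1 - ν) / Real.Gamma ν * u ^ ν * besselK ν u = I / Real.Gamma ν := by
    have h2 : (2:ℝ) ^ (1 - ν) * 2 ^ (ν - 1) = 1 := by
      rw [← Real.rpow_add (by norm_num : (0:ℝ) < 2)]
      norm_num
    calc (2:ℝ) ^ (1 - ν) / Real.Gamma ν * u ^ ν * besselK ν u
        = (2:ℝ) ^ (1 - ν) / Real.Gamma ν * (u ^ ν * besselK ν u) := by ring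
      _ = (2:ℝ) ^ (1 - ν) / Real.Gamma ν * (2 ^ (ν - 1) * I) := by rw [hrepr]
      _ = ((2:ℝ) ^ (1 - ν) * 2 ^ (ν - 1)) * I / Real.Gamma ν := by ring
      _ = I / Real.Gamma ν := by rw [h2, one_mul]
  have hT : u ^ 2 * T = (∫ s in Set.Ioi (0:ℝ), Real.exp (-s) * s ^ (ν - 1)) - I := by
    rw [hTdef, ← MeasureTheory.integral_const_mul, hI,
      ← MeasureTheory.integral_sub hGint hginteg]
    refine MeasureTheory.integral_congr_ae (Filter.Eventually.of_forall fun s => ?_)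
    field_simp
  rw [← hGeq] at hT
  show (Real.Gamma ν)⁻¹ * T = (1 - (2:ℝ) ^ (1 - ν) / Real.Gamma ν * u ^ ν * besselK ν u) / u ^ 2
  rw [hc]
  field_simp
  linear_combination hT
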